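/- Let P = s, [v_1,B], [v_2,A], …, [v_l,Z] be a shortest strongly simple path in G_M from s to [v_l,Z], so that level([v_l,Z]) = l. Let [v_j,X] be the j-th node of P (counting from s, so [v_j,X] appears at distance j along P), and suppose level([v_j,X̄]) ≥ l (or level([v_j,X̄]) is undefined). Then level([v_j,X]) = j, and level([v_i,Y]) < level([v_j,X]) for every node [v_i,Y] of P with i < j. -/

import Mathlib

variable {V : Type*}

/-- `M` is a matching of the simple graph `G`: a set of edges of `G`,
no two of which share a node. -/
def IsMatchingOn (G : SimpleGraph V) (M : Set (Sym2 V)) : Prop :=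
  M ⊆ G.edgeSet ∧ ∀ e ∈ M, ∀ f ∈ M, ∀ v : V, v ∈ e → v ∈ f → e = f

/-- A node is `M`-free if it is incident to no edge of `M`. -/
def MFree (M : Set (Sym2 V)) (v : V) : Prop := ∀ e ∈ M, v ∉ e

/-- The two labels `A` and `B`. -/
inductive Lbl where
  | A : Lbl
  | B : Lbl

/-- The opposite label: `Ā = B` and `B̄ = A`. -/
def Lbl.flip : Lbl → Lbl
  | .A => .B
  | .B => .A

/-- Nodes of the directed graph `G_M`: the nodes `[v,A]`, `[v,B]` for `v ∈ V`
together with two new nodes `s` and `t`. -/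
inductive GMNode (V : Type*) where
  | inner : V → Lbl → GMNode V
  | s : GMNode V
  | t : GMNode V

/-- The directed adjacency of `G_M`: the edges `([v,A],[w,B])` and
`([w,A],[v,B])` for `(v,w) ∈ M`; the edges `([x,B],[y,A])` and `([y,B],[x,A])`
for `(x,y) ∈ E ∖ M`; and the edges `(s,[v,B])` and `([v,A],t)` for every
`M`-free node `v`. -/
def gmAdj (G : SimpleGraph V) (M : Set (Sym2 V)) : GMNode V → GMNode V → Prop
  | .inner v .A, .inner w .B => s(v, w) ∈ M
  | .inner x .B, .inner y .A => s(x, y) ∈ G.edgeSet \ M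
  | .s, .inner v .B => MFree M v
  | .inner v .A, .t => MFree M v
  | _, _ => False

/-- `p` is a directed path from `u` to `v` with respect to the relation `R`. -/
def IsDirPath {α : Type*} (R : α → α → Prop) (p : List α) (u v : α) : Prop :=
  p.Chain' R ∧ p.head? = some u ∧ p.getLast? = some v

/-- A list of nodes of `G_M` is strongly simple if it has no repeated node and
contains, for each `v ∈ V`, at most one of the two nodes `[v,A]`, `[v,B]`. -/
def StronglySimple (p : List (GMNode V)) : Prop :=
  p.Nodup ∧ ∀ v : V, ¬(GMNode.inner v .A ∈ p ∧ GMNode.inner v .B ∈ p)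

/-- The level of a node of `G_M`: the length of a shortest strongly simple path
from `s` to it (`⊤` if there is no such path, i.e. the level is undefined). -/
noncomputable def gmLevel (G : SimpleGraph V) (M : Set (Sym2 V)) (x : GMNode V) : ℕ∞ :=
  sInf ((fun p : List (GMNode V) => ((p.length - 1 : ℕ) : ℕ∞)) ''
    {p : List (GMNode V) | IsDirPath (gmAdj G M) p GMNode.s x ∧ StronglySimple p})

-- helpers
lemma Lbl.flip_flip : ∀ L : Lbl, L.flip.flip = L := by intro L; cases L <;> rfl

lemma Lbl.eq_or_eq_flip : ∀ L K : Lbl, L = K ∨ L = K.flip := by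
  intro L K; cases L <;> cases K <;> simp [Lbl.flip]

def flipNode : GMNode V → GMNode V
  | .inner v L => .inner v L.flip
  | .s => .t
  | .t => .s

lemma gmAdj_flipNode {G : SimpleGraph V} {M : Set (Sym2 V)} {x y : GMNode V}
    (h : gmAdj G M x y) : gmAdj G M (flipNode y) (flipNode x) := by
  revert h
  match x, y with
  | .inner a La, .inner b Lb =>
    cases La <;> cases Lb <;> simp only [gmAdj, flipNode, Lbl.flip] <;>
      first | exact False.elim | exact id | (intro h; rwa [Sym2.eq_swap])
  | .inner a La, .s => cases La <;> exact False.elim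
  | .inner a La, .t =>
    cases La <;> simp only [gmAdj, flipNode, Lbl.flip] <;>
      first | exact False.elim | exact id
  | .s, .inner b Lb =>
    cases Lb <;> simp only [gmAdj, flipNode, Lbl.flip] <;>
      first | exact False.elim | exact id
  | .s, .s => exact False.elim
  | .s, .t => exact False.elim
  | .t, .inner b Lb => cases Lb <;> exact False.elim
  | .t, .s => exact False.elim
  | .t, .t => exact False.elim

lemma chain'_rel {α : Type*} {R : α → α → Prop} {l : List α} (h : List.Chain' R l)
    {i : ℕ} {a b : α} (ha : l[i]? = some a) (hb : l[i+1]? = some b) : R a b := by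
  rw [List.getElem?_eq_some_iff] at ha hb
  obtain ⟨hi, rfl⟩ := ha
  obtain ⟨hi1, rfl⟩ := hb
  have := List.isChain_iff_getElem.1 h i (by omega)
  simpa using this

lemma nodup_inj {α : Type*} {l : List α} (h : l.Nodup) {i j : ℕ} {a : α}
    (hi : l[i]? = some a) (hj : l[j]? = some a) : i = j := by
  rw [List.getElem?_eq_some_iff] at hi hj
  obtain ⟨hi', e1⟩ := hi
  obtain ⟨hj', e2⟩ := hj
  exact (List.Nodup.getElem_inj_iff h).1 (e1.trans e2.symm)

lemma mem_of_getElem?' {α : Type*} {l : List α} {i : ℕ} {a : α} (h : l[i]? = some a) : a ∈ l := by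
  rw [List.getElem?_eq_some_iff] at h
  obtain ⟨hi, rfl⟩ := h
  exact List.getElem_mem hi

lemma getLast?_take_succ {α : Type*} {l : List α} {i : ℕ} (h : i < l.length) :
    (l.take (i+1)).getLast? = l[i]? := by
  rw [List.getLast?_eq_getElem?, List.length_take]
  have h2 : min (i+1) l.length - 1 = i := by omega
  rw [h2, List.getElem?_take]
  simp

lemma head?_take_succ {α : Type*} {l : List α} {i : ℕ} :
    (l.take (i+1)).head? = l.head? := by
  rw [List.head?_eq_getElem?, List.head?_eq_getElem?, List.getElem?_take]
  simp

lemma getLast?_drop_of_lt {α : Type*} {l : List α} {n : ℕ} (h : n < l.length) :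
    (l.drop n).getLast? = l.getLast? := by
  rw [List.getLast?_eq_getElem?, List.getLast?_eq_getElem?, List.getElem?_drop, List.length_drop]
  congr 1
  omega

lemma pair_contra {p : List (GMNode V)} (hp : ∀ v : V, ¬(GMNode.inner v .A ∈ p ∧ GMNode.inner v .B ∈ p))
    {u : V} {K : Lbl} (h1 : GMNode.inner u K ∈ p) (h2 : GMNode.inner u K.flip ∈ p) : False := by
  cases K
  · exact hp u ⟨h1, h2⟩
  · exact hp u ⟨h2, h1⟩

lemma ss_sublist {l1 l2 : List (GMNode V)} (h : l1.Sublist l2) (h2 : StronglySimple l2) :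
    StronglySimple l1 := by
  refine ⟨h2.1.sublist h, fun v hv => h2.2 v ⟨h.subset hv.1, h.subset hv.2⟩⟩

lemma ss_append {l1 l2 : List (GMNode V)} (h1 : StronglySimple l1) (h2 : StronglySimple l2)
    (hinner : ∀ x ∈ l2, ∃ u K, x = GMNode.inner u K)
    (hcross : ∀ (u : V) (L L' : Lbl), GMNode.inner u L ∈ l1 → GMNode.inner u L' ∈ l2 → False) :
    StronglySimple (l1 ++ l2) := by
  constructor
  · rw [List.nodup_append]
    refine ⟨h1.1, h2.1, fun x hx1 y hx2 hxy => ?_⟩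
    obtain rfl := hxy
    obtain ⟨u, K, rfl⟩ := hinner x hx2
    exact hcross u K K hx1 hx2
  · intro v hv
    obtain ⟨hA, hB⟩ := hv
    rw [List.mem_append] at hA hB
    rcases hA with hA | hA <;> rcases hB with hB | hB
    · exact h1.2 v ⟨hA, hB⟩
    · exact hcross v .A .B hA hB
    · exact hcross v .B .A hB hA
    · exact h2.2 v ⟨hA, hB⟩

lemma flipNode_involutive : Function.Involutive (flipNode (V := V)) := by
  intro x; cases x with
  | inner v L => simp [flipNode, Lbl.flip_flip]
  | s => rfl
  | t => rfl

lemma ss_flip {l : List (GMNode V)} (h : StronglySimple l) :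
    StronglySimple (l.reverse.map flipNode) := by
  constructor
  · exact (List.nodup_reverse.2 h.1).map flipNode_involutive.injective
  · intro v hv
    obtain ⟨hA, hB⟩ := hv
    rw [List.mem_map] at hA hB
    obtain ⟨a, ha, ha'⟩ := hA
    obtain ⟨b, hb, hb'⟩ := hB
    have ha2 : a = GMNode.inner v .B := by
      have := congrArg flipNode ha'
      rwa [flipNode_involutive a] at this
    have hb2 : b = GMNode.inner v .A := by
      have := congrArg flipNode hb'
      rwa [flipNode_involutive b] at this
    subst ha2 hb2
    rw [List.mem_reverse] at ha hb
    exact h.2 v ⟨hb, ha⟩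

lemma chain_t_not_mem {G : SimpleGraph V} {M : Set (Sym2 V)} :
    ∀ {l : List (GMNode V)}, List.Chain' (gmAdj G M) l →
    ∀ {v : V} {L : Lbl}, l.getLast? = some (.inner v L) → GMNode.t ∉ l := by
  intro l
  induction l with
  | nil => intro _ _ _ _ h; simp at h
  | cons a l' ih =>
    intro hc v L hl ht
    cases l' with
    | nil =>
      simp only [List.getLast?_singleton] at hl
      rw [List.mem_singleton] at ht
      rw [← ht] at hl
      simp at hl
    | cons b l'' =>
      rw [List.getLast?_cons_cons] at hl
      have hnot : GMNode.t ∉ b :: l'' := ih hc.tail hl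
      rcases List.mem_cons.1 ht with rfl | hmem
      · have : gmAdj G M GMNode.t b := (List.isChain_cons_cons.1 hc).1
        cases b with
        | inner u K => cases K <;> exact this
        | s => exact this
        | t => exact this
      · exact hnot hmem

lemma tail_inner {G : SimpleGraph V} {M : Set (Sym2 V)} {l : List (GMNode V)}
    (hc : List.Chain' (gmAdj G M) l) (hh : l.head? = some GMNode.s)
    {v : V} {L : Lbl} (hl : l.getLast? = some (.inner v L)) (hnd : l.Nodup) :
    ∀ x ∈ l.drop 1, ∃ u K, x = GMNode.inner u K := by
  intro x hx
  cases l with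
  | nil => simp at hx
  | cons a l' =>
    simp only [List.head?_cons, Option.some.injEq] at hh
    subst hh
    simp only [List.drop_succ_cons, List.drop_zero] at hx
    cases x with
    | inner u K => exact ⟨u, K, rfl⟩
    | s => exact absurd hx (List.nodup_cons.1 hnd).1
    | t => exact absurd (List.mem_cons_of_mem _ hx) (chain_t_not_mem hc hl)

lemma level_le_witness (G : SimpleGraph V) (M : Set (Sym2 V)) (x : GMNode V)
    {W : List (GMNode V)} (h1 : IsDirPath (gmAdj G M) W GMNode.s x) (h2 : StronglySimple W) :
    gmLevel G M x ≤ ((W.length - 1 : ℕ) : ℕ∞) :=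
  sInf_le ⟨W, ⟨h1, h2⟩, rfl⟩

/-- Lemma 5 (hk1): let `P` be a shortest strongly simple path from `s` to
`[v_l,Z]` (so `level([v_l,Z]) = l`, the length of `P`), and let `[v_j,X]` be
the `j`-th node of `P`.  If `level([v_j,X̄]) ≥ l` (an undefined level counting
as `⊤ ≥ l`), then `level([v_j,X]) = j` and every node `[v_i,Y]` of `P` with
`i < j` satisfies `level([v_i,Y]) < level([v_j,X])`. -/
theorem shortest_path_levels (G : SimpleGraph V) (M : Set (Sym2 V))
    (hM : IsMatchingOn G M)
    (p : List (GMNode V)) (vl : V) (Z : Lbl)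
    (hp : IsDirPath (gmAdj G M) p GMNode.s (.inner vl Z))
    (hss : StronglySimple p)
    (hshort : gmLevel G M (.inner vl Z) = ((p.length - 1 : ℕ) : ℕ∞))
    (j : ℕ) (vj : V) (X : Lbl) (hj : p[j]? = some (.inner vj X))
    (hflip : ((p.length - 1 : ℕ) : ℕ∞) ≤ gmLevel G M (.inner vj X.flip)) :
    gmLevel G M (.inner vj X) = (j : ℕ∞) ∧
      ∀ i < j, ∀ (vi : V) (Y : Lbl), p[i]? = some (.inner vi Y) →
        gmLevel G M (.inner vi Y) < gmLevel G M (.inner vj X) := by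
  classical
  obtain ⟨hchain, hhead, hlast⟩ := hp
  obtain ⟨hnd, hpair⟩ := hss
  have hp0 : p[0]? = some GMNode.s := by rwa [List.head?_eq_getElem?] at hhead
  have hjlen : j < p.length := (List.getElem?_eq_some_iff.1 hj).1
  have hj1 : 1 ≤ j := by
    rcases Nat.eq_zero_or_pos j with rfl | h
    · rw [hp0] at hj; cases hj
    · exact h
  have hplast : p[p.length - 1]? = some (GMNode.inner vl Z) := by
    rwa [List.getLast?_eq_getElem?] at hlast
  -- upper bound: any node at position i of p has level ≤ i
  have hub : ∀ (i : ℕ) (u : V) (K : Lbl), p[i]? = some (GMNode.inner u K) →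
      gmLevel G M (GMNode.inner u K) ≤ (i : ℕ∞) := by
    intro i u K hi
    have hilen : i < p.length := (List.getElem?_eq_some_iff.1 hi).1
    have hW : (p.take (i+1)).length = i + 1 := by rw [List.length_take]; omega
    have h1 : IsDirPath (gmAdj G M) (p.take (i+1)) GMNode.s (GMNode.inner u K) := by
      refine ⟨hchain.take _, ?_, ?_⟩
      · rw [head?_take_succ, hhead]
      · rw [getLast?_take_succ hilen, hi]
    have h2 : StronglySimple (p.take (i+1)) :=
      ss_sublist (List.take_sublist _ _) ⟨hnd, hpair⟩
    have h3 := level_le_witness G M _ h1 h2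
    rwa [hW, Nat.add_sub_cancel] at h3
  have hP2inner : ∀ x ∈ p.drop (j+1), ∃ u K, x = GMNode.inner u K := by
    intro x hx
    apply tail_inner hchain hhead hlast hnd
    have e : p.drop (j+1) = (p.drop 1).drop j := by
      rw [List.drop_drop]; congr 1; omega
    rw [e] at hx
    exact List.drop_subset _ _ hx
  have hmain : ¬ gmLevel G M (GMNode.inner vj X) < (j : ℕ∞) := by
    intro hlt
    rw [gmLevel, sInf_lt_iff] at hlt
    obtain ⟨a, ha, halt⟩ := hlt
    obtain ⟨q, hqmem, rfl⟩ := ha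
    obtain ⟨⟨hqc, hqh, hql⟩, hqnd, hqpair⟩ := hqmem
    have hq0 : q[0]? = some GMNode.s := by rwa [List.head?_eq_getElem?] at hqh
    have hqne : 0 < q.length := by
      by_contra h
      push_neg at h
      interval_cases hq : q.length
      rw [List.length_eq_zero_iff] at hq
      rw [hq] at hq0
      cases hq0
    set k := q.length - 1 with hkdef
    have hqlen : q.length = k + 1 := by omega
    have hqk : q[k]? = some (GMNode.inner vj X) := by
      rwa [List.getLast?_eq_getElem?] at hql
    have hkj : k < j := by
      have halt' : ((q.length - 1 : ℕ) : ℕ∞) < (j : ℕ∞) := halt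
      exact_mod_cast halt'
    set C : Set ℕ := {i' | ∃ (u : V) (L L' : Lbl),
      q[i']? = some (GMNode.inner u L) ∧ GMNode.inner u L' ∈ p.drop (j+1)} with hCdef
    by_cases hC : C.Nonempty
    · -- there is a conflict between q and the suffix of p
      obtain ⟨i0, hi0⟩ := hC
      have hiC : sInf C ∈ C := Nat.sInf_mem ⟨i0, hi0⟩
      set i := sInf C with hidef
      have himin : ∀ i' ∈ C, i ≤ i' := fun i' h => Nat.sInf_le h
      obtain ⟨w, Y, L', hqi, hwP2⟩ := hiC
      have hik : i ≤ k := by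
        have := (List.getElem?_eq_some_iff.1 hqi).1; omega
      obtain ⟨m, hm⟩ := List.mem_iff_getElem?.1 hwP2
      rw [List.getElem?_drop] at hm
      have hmlen : j+1+m < p.length := (List.getElem?_eq_some_iff.1 hm).1
      have hwp : GMNode.inner w L' ∈ p := mem_of_getElem?' hm
      have htakeh : (q.take (i+1)).head? = some GMNode.s := by
        rw [head?_take_succ, hqh]
      have htakel : (q.take (i+1)).getLast? = some (GMNode.inner w Y) := by
        rw [getLast?_take_succ (by omega : i < q.length), hqi]
      have htakelen : (q.take (i+1)).length = i + 1 := by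
        rw [List.length_take]; omega
      have htakess : StronglySimple (q.take (i+1)) :=
        ss_sublist (List.take_sublist _ _) ⟨hqnd, hqpair⟩
      have htakemem : ∀ {u : V} {L : Lbl}, GMNode.inner u L ∈ q.take (i+1) →
          ∃ i' ≤ i, q[i']? = some (GMNode.inner u L) := by
        intro u L h1
        obtain ⟨i', hi'⟩ := List.mem_iff_getElem?.1 h1
        rw [List.getElem?_take] at hi'
        by_cases hc2 : i' < i+1
        · rw [if_pos hc2] at hi'; exact ⟨i', by omega, hi'⟩
        · rw [if_neg hc2] at hi'; cases hi'
      rcases Lbl.eq_or_eq_flip L' Y with rfl | rfl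
      · -- Case B : the conflict has the same label
        set W := q.take (i+1) ++ p.drop (j+m+2) with hWdef
        have hWc : List.Chain' (gmAdj G M) W := by
          rw [hWdef]; show List.IsChain _ _; rw [List.isChain_append]
          refine ⟨hqc.take _, hchain.drop _, ?_⟩
          intro x hx y hy
          simp only [Option.mem_def] at hx hy
          rw [htakel] at hx
          injection hx with hx
          subst hx
          rw [List.head?_eq_getElem?, List.getElem?_drop] at hy
          refine chain'_rel hchain hm ?_
          rw [show j+1+m+1 = j+m+2+0 by omega]
          exact hy
        have hWh : W.head? = some GMNode.s := by
          rw [hWdef, List.head?_eq_getElem?,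
            List.getElem?_append_left (by omega : 0 < (q.take (i+1)).length),
            ← List.head?_eq_getElem?, htakeh]
        have hWl : W.getLast? = some (GMNode.inner vl Z) := by
          rw [hWdef, List.getLast?_append]
          by_cases hlt2 : j+m+2 < p.length
          · rw [getLast?_drop_of_lt hlt2, hlast]; rfl
          · have hdrop : p.drop (j+m+2) = [] := List.drop_eq_nil_of_le (by omega)
            rw [hdrop, List.getLast?_nil, Option.none_or, htakel]
            have hjm : j+1+m = p.length - 1 := by omega
            rw [hjm, hplast] at hm
            injection hm with hm
            rw [hm]
        have hWss : StronglySimple W := by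
          refine ss_append htakess
            (ss_sublist (List.drop_sublist _ _) ⟨hnd, hpair⟩) ?_ ?_
          · intro x hx
            apply hP2inner
            have e : p.drop (j+m+2) = (p.drop (j+1)).drop (m+1) := by
              rw [List.drop_drop]; congr 1; omega
            rw [e] at hx
            exact List.drop_subset _ _ hx
          · intro u L L₂ h1 h2
            obtain ⟨i', hi'le, hi'⟩ := htakemem h1
            have h2' : GMNode.inner u L₂ ∈ p.drop (j+1) := by
              have e : p.drop (j+m+2) = (p.drop (j+1)).drop (m+1) := by
                rw [List.drop_drop]; congr 1; omega
              rw [e] at h2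
              exact List.drop_subset _ _ h2
            have hge : i ≤ i' := himin i' ⟨u, L, L₂, hi', h2'⟩
            have hieq : i' = i := by omega
            rw [hieq] at hi'
            have he := hqi.symm.trans hi'
            injection he with he
            injection he with he1 he2
            subst he1
            obtain ⟨t, ht⟩ := List.mem_iff_getElem?.1 h2
            rw [List.getElem?_drop] at ht
            rcases Lbl.eq_or_eq_flip L₂ L' with rfl | rfl
            · have := nodup_inj hnd hm ht
              omega
            · exact pair_contra hpair hwp (mem_of_getElem?' ht)
        have hle := level_le_witness G M _ ⟨hWc, hWh, hWl⟩ hWss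
        rw [hshort] at hle
        have hle' : p.length - 1 ≤ W.length - 1 := by exact_mod_cast hle
        have hWlen : W.length = (i+1) + (p.length - (j+m+2)) := by
          rw [hWdef, List.length_append, htakelen, List.length_drop]
        omega
      · -- Case A : the conflict has the flipped label
        have hilt : i < k := by
          rcases Nat.lt_or_ge i k with h | h
          · exact h
          · exfalso
            have hieq : i = k := by omega
            rw [hieq] at hqi
            have he := hqk.symm.trans hqi
            injection he with he
            injection he with he1 he2
            subst he1; subst he2
            exact pair_contra hpair (mem_of_getElem?' hj) (List.drop_subset _ _ hwP2)
        set seg := (p.drop j).take (m+1) with hsegdef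
        have hseglen : seg.length = m + 1 := by
          rw [hsegdef, List.length_take, List.length_drop]; omega
        have hsegget : ∀ t, t < m+1 → seg[t]? = p[j+t]? := by
          intro t ht
          rw [hsegdef, List.getElem?_take, if_pos ht, List.getElem?_drop]
        set F := seg.reverse.map flipNode with hFdef
        have hFlen : F.length = m + 1 := by
          rw [hFdef, List.length_map, List.length_reverse, hseglen]
        have hFc : List.Chain' (gmAdj G M) F := by
          rw [hFdef]; show List.IsChain _ _; rw [List.isChain_map, List.isChain_reverse]
          exact ((hchain.drop j).take (m+1)).imp (fun a b h => gmAdj_flipNode h)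
        obtain ⟨z, hz⟩ : ∃ z, p[j+m]? = some z := by
          rw [List.getElem?_eq_getElem (show j+m < p.length by omega)]
          exact ⟨_, rfl⟩
        have hFh : F.head? = some (flipNode z) := by
          rw [hFdef, List.head?_map, List.head?_reverse, List.getLast?_eq_getElem?,
            hseglen, Nat.add_sub_cancel, hsegget m (by omega), hz]
          rfl
        have hFl : F.getLast? = some (GMNode.inner vj X.flip) := by
          rw [hFdef, List.getLast?_map, List.getLast?_reverse, List.head?_eq_getElem?,
            hsegget 0 (by omega), Nat.add_zero, hj]
          rfl
        set W := q.take (i+1) ++ F with hWdef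
        have hWc : List.Chain' (gmAdj G M) W := by
          rw [hWdef]; show List.IsChain _ _; rw [List.isChain_append]
          refine ⟨hqc.take _, hFc, ?_⟩
          intro x hx y hy
          simp only [Option.mem_def] at hx hy
          rw [htakel] at hx
          injection hx with hx
          subst hx
          rw [hFh] at hy
          injection hy with hy
          subst hy
          have hadj : gmAdj G M z (GMNode.inner w Y.flip) := by
            refine chain'_rel hchain hz ?_
            rw [show j+m+1 = j+1+m by omega]
            exact hm
          have h2 := gmAdj_flipNode hadj
          simp only [flipNode, Lbl.flip_flip] at h2
          exact h2
        have hWh : W.head? = some GMNode.s := by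
          rw [hWdef, List.head?_eq_getElem?,
            List.getElem?_append_left (by omega : 0 < (q.take (i+1)).length),
            ← List.head?_eq_getElem?, htakeh]
        have hWl : W.getLast? = some (GMNode.inner vj X.flip) := by
          rw [hWdef, List.getLast?_append, hFl]
          rfl
        have hsegsub : seg.Sublist p := (List.take_sublist _ _).trans (List.drop_sublist _ _)
        have hWss : StronglySimple W := by
          refine ss_append htakess (ss_flip (ss_sublist hsegsub ⟨hnd, hpair⟩)) ?_ ?_
          · intro x hx
            rw [hFdef, List.mem_map] at hx
            obtain ⟨y, hy, rfl⟩ := hx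
            rw [List.mem_reverse] at hy
            have hy2 : y ∈ p.drop 1 := by
              have e : p.drop j = (p.drop 1).drop (j-1) := by
                rw [List.drop_drop]; congr 1; omega
              have : y ∈ p.drop j := List.take_subset _ _ hy
              rw [e] at this
              exact List.drop_subset _ _ this
            obtain ⟨u, K, rfl⟩ := tail_inner hchain hhead hlast hnd y hy2
            exact ⟨u, K.flip, rfl⟩
          · intro u L L₂ h1 h2
            rw [hFdef, List.mem_map] at h2
            obtain ⟨y, hy, hy'⟩ := h2
            have hy2 : y = GMNode.inner u L₂.flip := by
              have := congrArg flipNode hy'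
              rwa [flipNode_involutive y] at this
            subst hy2
            rw [List.mem_reverse] at hy
            obtain ⟨t, ht⟩ := List.mem_iff_getElem?.1 hy
            have htlt : t < m + 1 := by
              have := (List.getElem?_eq_some_iff.1 ht).1
              omega
            rw [hsegget t htlt] at ht
            obtain ⟨i', hi'le, hi'⟩ := htakemem h1
            rcases Nat.eq_zero_or_pos t with rfl | htpos
            · -- conflict with p[j] itself
              rw [Nat.add_zero, hj] at ht
              injection ht with ht
              injection ht with ht1 ht2
              subst ht1
              rcases Lbl.eq_or_eq_flip L X with rfl | rfl
              · have := nodup_inj hqnd hi' hqk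
                omega
              · exact pair_contra hqpair (mem_of_getElem?' hqk) (mem_of_getElem?' hi')
            · -- conflict with the strict suffix
              have hmem2 : GMNode.inner u L₂.flip ∈ p.drop (j+1) := by
                apply mem_of_getElem?' (i := t - 1)
                rw [List.getElem?_drop, show j+1+(t-1) = j+t by omega]
                exact ht
              have hge : i ≤ i' := himin i' ⟨u, L, L₂.flip, hi', hmem2⟩
              have hieq : i' = i := by omega
              rw [hieq] at hi'
              have he := hqi.symm.trans hi'
              injection he with he
              injection he with he1 he2
              subst he1
              rcases Lbl.eq_or_eq_flip L₂ Y with rfl | rfl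
              · have := nodup_inj hnd hm ht
                omega
              · rw [Lbl.flip_flip] at ht
                exact pair_contra hpair (mem_of_getElem?' ht) hwp
        have hle := level_le_witness G M _ ⟨hWc, hWh, hWl⟩ hWss
        have hle2 := hflip.trans hle
        have hle' : p.length - 1 ≤ W.length - 1 := by exact_mod_cast hle2
        have hWlen : W.length = (i+1) + (m+1) := by
          rw [hWdef, List.length_append, htakelen, hFlen]
        omega
    · -- no conflict : concatenate q with the suffix of p
      set W := q ++ p.drop (j+1) with hWdef
      have hWc : List.Chain' (gmAdj G M) W := by
        rw [hWdef]; show List.IsChain _ _; rw [List.isChain_append]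
        refine ⟨hqc, hchain.drop _, ?_⟩
        intro x hx y hy
        simp only [Option.mem_def] at hx hy
        rw [hql] at hx
        injection hx with hx
        subst hx
        rw [List.head?_eq_getElem?, List.getElem?_drop] at hy
        refine chain'_rel hchain hj ?_
        rw [show j+1 = j+1+0 by omega]
        exact hy
      have hWh : W.head? = some GMNode.s := by
        rw [hWdef, List.head?_eq_getElem?,
          List.getElem?_append_left (by omega : 0 < q.length),
          ← List.head?_eq_getElem?, hqh]
      have hWl : W.getLast? = some (GMNode.inner vl Z) := by
        rw [hWdef, List.getLast?_append]
        by_cases hlt2 : j+1 < p.length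
        · rw [getLast?_drop_of_lt hlt2, hlast]; rfl
        · have hdrop : p.drop (j+1) = [] := List.drop_eq_nil_of_le (by omega)
          rw [hdrop, List.getLast?_nil, Option.none_or, hql]
          have hjm : j = p.length - 1 := by omega
          rw [hjm, hplast] at hj
          injection hj with hj
          rw [hj]
      have hWss : StronglySimple W := by
        refine ss_append ⟨hqnd, hqpair⟩
          (ss_sublist (List.drop_sublist _ _) ⟨hnd, hpair⟩) hP2inner ?_
        intro u L L' h1 h2
        obtain ⟨i', hi'⟩ := List.mem_iff_getElem?.1 h1
        exact hC ⟨i', u, L, L', hi', h2⟩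
      have hle := level_le_witness G M _ ⟨hWc, hWh, hWl⟩ hWss
      rw [hshort] at hle
      have hle' : p.length - 1 ≤ W.length - 1 := by exact_mod_cast hle
      have hWlen : W.length = q.length + (p.length - (j+1)) := by
        rw [hWdef, List.length_append, List.length_drop]
      omega
  have hlevj : gmLevel G M (GMNode.inner vj X) = (j : ℕ∞) :=
    le_antisymm (hub j vj X hj) (not_lt.1 hmain)
  refine ⟨hlevj, ?_⟩
  intro i hij vi Y hi
  calc gmLevel G M (GMNode.inner vi Y) ≤ (i : ℕ∞) := hub i vi Y hi
    _ < (j : ℕ∞) := by exact_mod_cast hij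
    _ = gmLevel G M (GMNode.inner vj X) := hlevj.symm
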